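/- Let c > 0 be real and let A, B be complex numbers with Re A > 0 and Re(A − B) > 1. Then the function (λ, y) ↦ λ^(A−1)·(y² + y⁻²)^B·exp(−c·λ·(y² + y⁻²))·(y − y⁻³) is integrable on (0, ∞) × (1, ∞), and ∫₀^∞ ∫₁^∞ λ^(A−1) (y² + y⁻²)^B e^(−c·λ·(y²+y⁻²)) (y − y⁻³) dy dλ = Γ(A) · c^(−A) · 2^(B−A) / (A − B − 1), where Γ is the complex Gamma function. -/

import Mathlib

set_option maxHeartbeats 1000000

open MeasureTheory Complex Set

namespace DIG

noncomputable def g (y : ℝ) : ℝ := y ^ 2 + (y ^ 2)⁻¹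

lemma g_hasDerivAt {y : ℝ} (hy : 0 < y) :
    HasDerivAt g (2 * (y - (y ^ 3)⁻¹)) y := by
  have h1 : HasDerivAt (fun y : ℝ => y ^ 2) (2 * y) y := by
    simpa using hasDerivAt_pow 2 y
  have h2 := h1.inv (by positivity)
  have := h1.add h2
  refine this.congr_deriv ?_
  field_simp
  ring

lemma phi_pos {y : ℝ} (hy : 1 < y) : 0 < y - (y ^ 3)⁻¹ := by
  have h3 : (1:ℝ) < y ^ 3 := one_lt_pow₀ hy (by norm_num)
  have : (y ^ 3)⁻¹ < 1 := by
    rw [inv_lt_one_iff₀]; right; exact h3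
  linarith

lemma g_strictMono : StrictMonoOn g (Ici 1) := by
  have hc : ContinuousOn g (Ici 1) := by
    intro x hx
    have hx0 : (0:ℝ) < x := lt_of_lt_of_le one_pos hx
    exact ((g_hasDerivAt hx0).continuousAt).continuousWithinAt
  refine strictMonoOn_of_deriv_pos (convex_Ici 1) hc ?_
  intro x hx
  rw [interior_Ici] at hx
  rw [(g_hasDerivAt (lt_trans one_pos hx)).deriv]
  have := phi_pos hx
  linarith

lemma g_one : g 1 = 2 := by norm_num [g]

lemma g_gt {y : ℝ} (hy : 1 < y) : 2 < g y := by
  have := g_strictMono (mem_Ici.2 le_rfl) (mem_Ici.2 hy.le) hy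
  rwa [g_one] at this

lemma g_pos {y : ℝ} (hy : 1 < y) : 0 < g y := lt_trans (by norm_num) (g_gt hy)

lemma g_image : g '' Ioi 1 = Ioi 2 := by
  apply Subset.antisymm
  · rintro _ ⟨y, hy, rfl⟩
    exact g_gt hy
  · intro u hu
    have hu2 : (2:ℝ) < u := hu
    have h1u : (1:ℝ) ≤ u := by linarith
    have hgu : u < g u := by
      have : u ^ 2 ≤ g u := by
        have : (0:ℝ) < (u ^ 2)⁻¹ := by positivity
        unfold g; linarith
      nlinarith
    have hc : ContinuousOn g (Icc 1 u) := by
      intro x hx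
      have hx0 : (0:ℝ) < x := lt_of_lt_of_le one_pos hx.1
      exact ((g_hasDerivAt hx0).continuousAt).continuousWithinAt
    have hmem : u ∈ Ioo (g 1) (g u) := by
      rw [g_one]; exact ⟨hu2, hgu⟩
    obtain ⟨y, hy, hyu⟩ := intermediate_value_Ioo h1u hc hmem
    exact ⟨y, hy.1, hyu⟩

lemma g_derivWithin {y : ℝ} (hy : y ∈ Ioi 1) :
    HasDerivWithinAt g (2 * (y - (y ^ 3)⁻¹)) (Ioi 1) y :=
  (g_hasDerivAt (lt_trans one_pos hy)).hasDerivWithinAt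

lemma g_injOn : InjOn g (Ioi 1) :=
  (g_strictMono.mono (Ioi_subset_Ici le_rfl)).injOn

variable {E : Type*} [NormedAddCommGroup E] [NormedSpace ℝ E]

lemma cov_integral (F : ℝ → E) :
    ∫ u in Ioi (2:ℝ), F u = ∫ y in Ioi (1:ℝ), (2 * (y - (y ^ 3)⁻¹)) • F (g y) := by
  rw [← g_image, integral_image_eq_integral_abs_deriv_smul measurableSet_Ioi
    (fun y hy => g_derivWithin hy) g_injOn]
  refine setIntegral_congr_fun measurableSet_Ioi (fun y hy => ?_)
  rw [abs_of_pos (by have := phi_pos hy; linarith)]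

lemma cov_integrableOn_iff (F : ℝ → E) :
    IntegrableOn F (Ioi (2:ℝ)) ↔
      IntegrableOn (fun y => (2 * (y - (y ^ 3)⁻¹)) • F (g y)) (Ioi (1:ℝ)) := by
  rw [← g_image, integrableOn_image_iff_integrableOn_abs_deriv_smul measurableSet_Ioi
    (fun y hy => g_derivWithin hy) g_injOn]
  refine integrableOn_congr_fun (fun y hy => ?_) measurableSet_Ioi
  rw [abs_of_pos (by have := phi_pos hy; linarith)]

lemma integrableOn_cpow_mul_exp {a : ℂ} (ha : 0 < a.re) {r : ℝ} (hr : 0 < r) :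
    IntegrableOn (fun t : ℝ => (t : ℂ) ^ (a - 1) * Complex.exp (-(r * t))) (Ioi 0) := by
  have h0 := Complex.GammaIntegral_convergent ha
  have h1 : IntegrableOn (fun x : ℝ =>
      (Real.exp (-(r * x)) : ℂ) * ((r * x : ℝ) : ℂ) ^ (a - 1)) (Ioi 0) := by
    have := (integrableOn_Ioi_comp_mul_left_iff
      (fun x : ℝ => (Real.exp (-x) : ℂ) * (x : ℂ) ^ (a - 1)) 0 hr).mpr (by simpa using h0)
    simpa using this
  have h2 := h1.const_mul (((r : ℂ) ^ (a - 1))⁻¹)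
  refine IntegrableOn.congr_fun h2 (fun t ht => ?_) measurableSet_Ioi
  have hrne : ((r : ℂ)) ^ (a - 1) ≠ 0 := by
    rw [Ne, cpow_eq_zero_iff]
    simp [ofReal_ne_zero.mpr hr.ne']
  rw [show ((r * t : ℝ) : ℂ) = (r : ℂ) * (t : ℂ) by push_cast; ring,
    mul_cpow_ofReal_nonneg hr.le (le_of_lt ht), Complex.ofReal_exp]
  push_cast
  field_simp

section main

variable {c : ℝ} {A B : ℂ}

/-- Factorization of the integrand in `l`. -/
lemma fiber_factor (c : ℝ) (A B : ℂ) (y l : ℝ) :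
    ((l : ℂ) ^ (A - 1)) * ((g y : ℝ) : ℂ) ^ B * ((Real.exp (-(c * l * g y)) : ℝ) : ℂ)
        * ((y - (y ^ 3)⁻¹ : ℝ) : ℂ)
      = ((l : ℂ) ^ (A - 1) * Complex.exp (-(((c * g y : ℝ) : ℂ) * (l : ℂ))))
        * (((g y : ℝ) : ℂ) ^ B * ((y - (y ^ 3)⁻¹ : ℝ) : ℂ)) := by
  rw [show (-(c * l * g y) : ℝ) = -(c * g y * l) by ring, Complex.ofReal_exp]
  push_cast
  ring_nf

lemma norm_f (hc : 0 < c) {l y : ℝ} (hl : 0 < l) (hy : 1 < y) :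
    ‖((l : ℂ) ^ (A - 1)) * ((g y : ℝ) : ℂ) ^ B * ((Real.exp (-(c * l * g y)) : ℝ) : ℂ)
        * ((y - (y ^ 3)⁻¹ : ℝ) : ℂ)‖
      = (l ^ (A.re - 1) * Real.exp (-(c * g y * l)))
        * ((g y) ^ B.re * (y - (y ^ 3)⁻¹)) := by
  have hU := g_pos hy
  have hY := phi_pos hy
  rw [norm_mul, norm_mul, norm_mul,
    norm_cpow_eq_rpow_re_of_pos hl, norm_cpow_eq_rpow_re_of_pos hU, Complex.norm_real,
    Complex.norm_real, Real.norm_eq_abs, Real.norm_eq_abs,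
    abs_of_pos (Real.exp_pos _), abs_of_pos hY,
    show (-(c * l * g y) : ℝ) = -(c * g y * l) by ring]
  have : (A - 1).re = A.re - 1 := by simp
  rw [this]
  ring

lemma complex_fiber (hc : 0 < c) (hA : 0 < A.re) {y : ℝ} (hy : 1 < y) :
    (∫ l in Ioi (0:ℝ), ((l : ℂ) ^ (A - 1)) * ((g y : ℝ) : ℂ) ^ B
        * ((Real.exp (-(c * l * g y)) : ℝ) : ℂ) * ((y - (y ^ 3)⁻¹ : ℝ) : ℂ))
      = Complex.Gamma A * (c : ℂ) ^ (-A)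
        * (((g y : ℝ) : ℂ) ^ (B - A) * ((y - (y ^ 3)⁻¹ : ℝ) : ℂ)) := by
  have hU := g_pos hy
  have hr : 0 < c * g y := by positivity
  simp_rw [fiber_factor c A B y]
  rw [integral_mul_const, Complex.integral_cpow_mul_exp_neg_mul_Ioi hA hr]
  have harg : ((c * g y : ℝ) : ℂ).arg ≠ Real.pi := by
    rw [Complex.arg_ofReal_of_nonneg hr.le]
    exact Ne.symm Real.pi_ne_zero
  have h1 : (1 / ((c * g y : ℝ) : ℂ)) ^ A = (c : ℂ) ^ (-A) * ((g y : ℝ) : ℂ) ^ (-A) := by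
    rw [one_div, inv_cpow _ _ harg, ← cpow_neg, Complex.ofReal_mul,
      mul_cpow_ofReal_nonneg hc.le hU.le]
  have h2 : ((g y : ℝ) : ℂ) ^ (B - A) = ((g y : ℝ) : ℂ) ^ B * ((g y : ℝ) : ℂ) ^ (-A) := by
    rw [sub_eq_add_neg, cpow_add _ _ (ofReal_ne_zero.mpr hU.ne')]
  rw [h1, h2]; ring

lemma norm_fiber_integral (hc : 0 < c) (hA : 0 < A.re) {y : ℝ} (hy : 1 < y) :
    (∫ l in Ioi (0:ℝ), ‖((l : ℂ) ^ (A - 1)) * ((g y : ℝ) : ℂ) ^ B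
        * ((Real.exp (-(c * l * g y)) : ℝ) : ℂ) * ((y - (y ^ 3)⁻¹ : ℝ) : ℂ)‖)
      = (Real.Gamma A.re * (1 / c) ^ A.re)
        * ((g y) ^ (B.re - A.re) * (y - (y ^ 3)⁻¹)) := by
  have hU := g_pos hy
  have hr : 0 < c * g y := by positivity
  rw [setIntegral_congr_fun measurableSet_Ioi (fun l hl => norm_f hc hl hy),
    integral_mul_const, Real.integral_rpow_mul_exp_neg_mul_Ioi hA hr,
    show (1 / (c * g y)) = (1 / c) * (g y)⁻¹ by field_simp,
    Real.mul_rpow (by positivity) (by positivity), Real.inv_rpow hU.le,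
    ← Real.rpow_neg hU.le, show B.re - A.re = B.re + -A.re from sub_eq_add_neg _ _,
    Real.rpow_add hU]
  ring

end main

end DIG


open DIG

/-- The double integral of equation (2.2.8) of the paper:
`∫₀^∞ ∫₁^∞ λ^(A−1)(y²+y⁻²)^B e^(−cλ(y²+y⁻²))(y−y⁻³) dy dλ = Γ(A)·c^(−A)·2^(B−A)/(A−B−1)`. -/
theorem double_integral_gamma (c : ℝ) (hc : 0 < c) (A B : ℂ)
    (hA : 0 < A.re) (hAB : 1 < (A - B).re) :
    IntegrableOn (fun p : ℝ × ℝ =>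
        ((p.1 : ℂ) ^ (A - 1)) * (((p.2 ^ 2 + (p.2 ^ 2)⁻¹ : ℝ) : ℂ) ^ B)
          * ((Real.exp (-(c * p.1 * (p.2 ^ 2 + (p.2 ^ 2)⁻¹))) : ℝ) : ℂ)
          * ((p.2 - (p.2 ^ 3)⁻¹ : ℝ) : ℂ))
      (Set.Ioi 0 ×ˢ Set.Ioi 1) ∧
    (∫ l in Set.Ioi (0 : ℝ), ∫ y in Set.Ioi (1 : ℝ),
        ((l : ℂ) ^ (A - 1)) * (((y ^ 2 + (y ^ 2)⁻¹ : ℝ) : ℂ) ^ B)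
          * ((Real.exp (-(c * l * (y ^ 2 + (y ^ 2)⁻¹))) : ℝ) : ℂ)
          * ((y - (y ^ 3)⁻¹ : ℝ) : ℂ))
      = Complex.Gamma A * (c : ℂ) ^ (-A) * 2 ^ (B - A) / (A - B - 1) := by
  have hBA : (B - A).re < -1 := by
    simp only [Complex.sub_re] at hAB ⊢
    linarith
  have hcont : ContinuousOn (fun p : ℝ × ℝ =>
      ((p.1 : ℂ) ^ (A - 1)) * (((p.2 ^ 2 + (p.2 ^ 2)⁻¹ : ℝ) : ℂ) ^ B)
        * ((Real.exp (-(c * p.1 * (p.2 ^ 2 + (p.2 ^ 2)⁻¹))) : ℝ) : ℂ)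
        * ((p.2 - (p.2 ^ 3)⁻¹ : ℝ) : ℂ)) (Set.Ioi 0 ×ˢ Set.Ioi 1) := by
    intro p hp
    have hp1 : (0:ℝ) < p.1 := hp.1
    have hp2 : (1:ℝ) < p.2 := hp.2
    have h20 : p.2 ≠ 0 := (lt_trans one_pos hp2).ne'
    have cg : ContinuousAt (fun q : ℝ × ℝ => q.2 ^ 2 + (q.2 ^ 2)⁻¹) p :=
      (continuousAt_snd.pow 2).add ((continuousAt_snd.pow 2).inv₀ (pow_ne_zero 2 h20))
    have c1 : ContinuousAt (fun q : ℝ × ℝ => ((q.1 : ℝ) : ℂ) ^ (A - 1)) p :=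
      (Complex.continuousAt_ofReal_cpow_const p.1 (A - 1) (Or.inr hp1.ne')).comp
        continuousAt_fst
    have hUpos : (0:ℝ) < p.2 ^ 2 + (p.2 ^ 2)⁻¹ := by positivity
    have c2 : ContinuousAt
        (fun q : ℝ × ℝ => ((q.2 ^ 2 + (q.2 ^ 2)⁻¹ : ℝ) : ℂ) ^ B) p :=
      ContinuousAt.comp (g := fun z : ℝ => ((z : ℂ) ^ B))
        (f := fun q : ℝ × ℝ => q.2 ^ 2 + (q.2 ^ 2)⁻¹)
        (Complex.continuousAt_ofReal_cpow_const _ B (Or.inr hUpos.ne')) cg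
    have c3 : ContinuousAt (fun q : ℝ × ℝ =>
        ((Real.exp (-(c * q.1 * (q.2 ^ 2 + (q.2 ^ 2)⁻¹))) : ℝ) : ℂ)) p :=
      Complex.continuous_ofReal.continuousAt.comp
        ((Real.continuous_exp.continuousAt).comp
          (((continuousAt_const.mul continuousAt_fst).mul cg).neg))
    have c4 : ContinuousAt (fun q : ℝ × ℝ => ((q.2 - (q.2 ^ 3)⁻¹ : ℝ) : ℂ)) p :=
      Complex.continuous_ofReal.continuousAt.comp
        (continuousAt_snd.sub ((continuousAt_snd.pow 3).inv₀ (pow_ne_zero 3 h20)))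
    exact (((c1.mul c2).mul c3).mul c4).continuousWithinAt
  have hmeas : AEStronglyMeasurable (fun p : ℝ × ℝ =>
      ((p.1 : ℂ) ^ (A - 1)) * (((p.2 ^ 2 + (p.2 ^ 2)⁻¹ : ℝ) : ℂ) ^ B)
        * ((Real.exp (-(c * p.1 * (p.2 ^ 2 + (p.2 ^ 2)⁻¹))) : ℝ) : ℂ)
        * ((p.2 - (p.2 ^ 3)⁻¹ : ℝ) : ℂ))
      ((volume.restrict (Set.Ioi (0:ℝ))).prod (volume.restrict (Set.Ioi (1:ℝ)))) := by
    rw [Measure.prod_restrict]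
    have := hcont.aestronglyMeasurable (μ := volume) (measurableSet_Ioi.prod measurableSet_Ioi)
    rwa [MeasureTheory.Measure.volume_eq_prod] at this
  have hfib : ∀ y : ℝ, y ∈ Set.Ioi (1:ℝ) → Integrable (fun l : ℝ =>
      ((l : ℂ) ^ (A - 1)) * (((y ^ 2 + (y ^ 2)⁻¹ : ℝ) : ℂ) ^ B)
        * ((Real.exp (-(c * l * (y ^ 2 + (y ^ 2)⁻¹))) : ℝ) : ℂ)
        * ((y - (y ^ 3)⁻¹ : ℝ) : ℂ)) (volume.restrict (Set.Ioi 0)) := by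
    intro y hy
    have hy1 : (1:ℝ) < y := hy
    have h1 : IntegrableOn (fun l : ℝ =>
        ((l : ℂ) ^ (A - 1) * Complex.exp (-(((c * g y : ℝ) : ℂ) * (l : ℂ))))
          * (((g y : ℝ) : ℂ) ^ B * ((y - (y ^ 3)⁻¹ : ℝ) : ℂ))) (Set.Ioi 0) :=
      (integrableOn_cpow_mul_exp hA (by have := g_pos hy1; positivity)).mul_const _
    exact IntegrableOn.congr_fun h1
      (fun l _ => (fiber_factor c A B y l).symm) measurableSet_Ioi
  have hnormint : Integrable (fun y : ℝ => ∫ l : ℝ, ‖((l : ℂ) ^ (A - 1))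
      * (((y ^ 2 + (y ^ 2)⁻¹ : ℝ) : ℂ) ^ B)
      * ((Real.exp (-(c * l * (y ^ 2 + (y ^ 2)⁻¹))) : ℝ) : ℂ)
      * ((y - (y ^ 3)⁻¹ : ℝ) : ℂ)‖ ∂(volume.restrict (Set.Ioi 0)))
      (volume.restrict (Set.Ioi 1)) := by
    have hq : B.re - A.re < -1 := by simpa [Complex.sub_re] using hBA
    have hF : IntegrableOn (fun u : ℝ => u ^ (B.re - A.re)) (Set.Ioi 2) :=
      integrableOn_Ioi_rpow_of_lt hq two_pos
    have h2 : IntegrableOn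
        (fun y => (2 * (y - (y ^ 3)⁻¹)) • (g y) ^ (B.re - A.re)) (Set.Ioi 1) :=
      (cov_integrableOn_iff (fun u : ℝ => u ^ (B.re - A.re))).mp hF
    have h3 := h2.const_mul (Real.Gamma A.re * (1 / c) ^ A.re / 2)
    refine IntegrableOn.congr_fun h3 (fun y hy => ?_) measurableSet_Ioi
    have hy1 : (1:ℝ) < y := hy
    show Real.Gamma A.re * (1 / c) ^ A.re / 2 * ((2 * (y - (y ^ 3)⁻¹))
        • (g y) ^ (B.re - A.re))
      = ∫ l in Set.Ioi (0:ℝ), ‖((l : ℂ) ^ (A - 1)) * ((g y : ℝ) : ℂ) ^ B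
          * ((Real.exp (-(c * l * g y)) : ℝ) : ℂ) * ((y - (y ^ 3)⁻¹ : ℝ) : ℂ)‖
    rw [norm_fiber_integral hc hA hy1, smul_eq_mul]
    ring
  have hint2 : Integrable (fun p : ℝ × ℝ =>
      ((p.1 : ℂ) ^ (A - 1)) * (((p.2 ^ 2 + (p.2 ^ 2)⁻¹ : ℝ) : ℂ) ^ B)
        * ((Real.exp (-(c * p.1 * (p.2 ^ 2 + (p.2 ^ 2)⁻¹))) : ℝ) : ℂ)
        * ((p.2 - (p.2 ^ 3)⁻¹ : ℝ) : ℂ))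
      ((volume.restrict (Set.Ioi (0:ℝ))).prod (volume.restrict (Set.Ioi (1:ℝ)))) := by
    rw [integrable_prod_iff' hmeas]
    exact ⟨(ae_restrict_iff' measurableSet_Ioi).mpr (Filter.Eventually.of_forall hfib),
      hnormint⟩
  constructor
  · rw [IntegrableOn, MeasureTheory.Measure.volume_eq_prod, ← Measure.prod_restrict]
    exact hint2
  · have hswap := MeasureTheory.integral_integral_swap (f := fun (l : ℝ) (y : ℝ) =>
      ((l : ℂ) ^ (A - 1)) * (((y ^ 2 + (y ^ 2)⁻¹ : ℝ) : ℂ) ^ B)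
        * ((Real.exp (-(c * l * (y ^ 2 + (y ^ 2)⁻¹))) : ℝ) : ℂ)
        * ((y - (y ^ 3)⁻¹ : ℝ) : ℂ)) hint2
    rw [hswap]
    have houter : (∫ y in Set.Ioi (1:ℝ), ∫ l in Set.Ioi (0:ℝ),
        ((l : ℂ) ^ (A - 1)) * (((y ^ 2 + (y ^ 2)⁻¹ : ℝ) : ℂ) ^ B)
          * ((Real.exp (-(c * l * (y ^ 2 + (y ^ 2)⁻¹))) : ℝ) : ℂ)
          * ((y - (y ^ 3)⁻¹ : ℝ) : ℂ))
        = ∫ y in Set.Ioi (1:ℝ), Complex.Gamma A * (c : ℂ) ^ (-A)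
            * (((g y : ℝ) : ℂ) ^ (B - A) * ((y - (y ^ 3)⁻¹ : ℝ) : ℂ)) :=
      setIntegral_congr_fun measurableSet_Ioi (fun y hy => complex_fiber hc hA hy)
    rw [houter]
    simp_rw [mul_assoc]
    rw [integral_const_mul, integral_const_mul]
    have hval : (∫ y in Set.Ioi (1:ℝ),
        ((g y : ℝ) : ℂ) ^ (B - A) * ((y - (y ^ 3)⁻¹ : ℝ) : ℂ))
        = 2 ^ (B - A) / (A - B - 1) := by
      have hcov := cov_integral (fun u : ℝ => ((u : ℝ) : ℂ) ^ (B - A))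
      have hlhs : (∫ y in Set.Ioi (1:ℝ),
          ((g y : ℝ) : ℂ) ^ (B - A) * ((y - (y ^ 3)⁻¹ : ℝ) : ℂ))
          = (2:ℝ)⁻¹ • ∫ u in Set.Ioi (2:ℝ), ((u : ℝ) : ℂ) ^ (B - A) := by
        rw [hcov, ← integral_smul]
        refine setIntegral_congr_fun measurableSet_Ioi (fun y hy => ?_)
        rw [smul_smul, show (2:ℝ)⁻¹ * (2 * (y - (y ^ 3)⁻¹)) = y - (y ^ 3)⁻¹ by ring,
          Complex.real_smul]
        ring
      rw [hlhs, integral_Ioi_cpow_of_lt hBA two_pos]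
      have hne : B - A + 1 ≠ 0 := by
        intro h
        have h0 : (B - A + 1).re = 0 := by rw [h]; simp
        simp only [Complex.add_re, Complex.sub_re, Complex.one_re] at h0
        have hBA' := hBA
        simp only [Complex.sub_re] at hBA'
        linarith
      have hne2 : A - B - 1 ≠ 0 := by
        have : A - B - 1 = -(B - A + 1) := by ring
        rw [this]
        exact neg_ne_zero.mpr hne
      rw [show ((2:ℝ) : ℂ) = (2:ℂ) by norm_num,
        show B - A + 1 = (B - A) + 1 from rfl, cpow_add _ _ (two_ne_zero), cpow_one,
        Complex.real_smul]
      push_cast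
      field_simp
      ring
    rw [hval]
    ring
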